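/- arXiv:1107.5363 — 3 statements merged into one kernel-verified Lean document; each statement's English description precedes it below -/
import Mathlib

section
/- If A is a real symmetric n×n matrix, s ≥ 0 is a real number such that sI - A is positive definite, b ∈ ℝⁿ, and Q is an n×r real matrix of full column rank, then bᵀ(sI - A)⁻¹b - bᵀQ(Qᵀ(sI - A)Q)⁻¹Qᵀb ≥ 0. -/
open Matrix

theorem stmt_0 {n r : ℕ} (A : Matrix (Fin n) (Fin n) ℝ) (hA : A.IsSymm)
    (s : ℝ) (hs : 0 ≤ s)
    (hpd : (s • (1 : Matrix (Fin n) (Fin n) ℝ) - A).PosDef)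
    (b : Fin n → ℝ) (Q : Matrix (Fin n) (Fin r) ℝ) (hQ : Q.rank = r) :
    0 ≤ b ⬝ᵥ (s • (1 : Matrix (Fin n) (Fin n) ℝ) - A)⁻¹.mulVec b -
      (Qᵀ.mulVec b) ⬝ᵥ (Qᵀ * (s • (1 : Matrix (Fin n) (Fin n) ℝ) - A) * Q)⁻¹.mulVec
        (Qᵀ.mulVec b) := by
  set M := s • (1 : Matrix (Fin n) (Fin n) ℝ) - A with hMdef
  have hMsymm : Mᵀ = M := by
    simp [hMdef, transpose_sub, transpose_smul, hA.eq]
  -- Q has trivial kernel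
  have hker : LinearMap.ker Q.mulVecLin = ⊥ := by
    have h1 := LinearMap.finrank_range_add_finrank_ker Q.mulVecLin
    have h2 : Module.finrank ℝ (Fin r → ℝ) = r := by simp
    rw [Matrix.rank] at hQ
    have h3 : Module.finrank ℝ (LinearMap.ker Q.mulVecLin) = 0 := by omega
    exact Submodule.finrank_eq_zero.mp h3
  have hQinj : ∀ x : Fin r → ℝ, Q *ᵥ x = 0 → x = 0 := by
    intro x hx
    exact Matrix.ker_mulVecLin_eq_bot_iff.mp hker x hx
  -- N := Qᵀ M Q is positive definite
  set N := Qᵀ * M * Q with hNdef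
  have hNsymm : Nᵀ = N := by
    rw [hNdef, transpose_mul, transpose_mul, transpose_transpose, hMsymm, Matrix.mul_assoc]
  have hNpd : N.PosDef := by
    refine Matrix.PosDef.of_dotProduct_mulVec_pos ?_ ?_
    · ext i j
      rw [conjTranspose_apply, star_trivial]
      have : Nᵀ i j = N i j := by rw [hNsymm]
      simpa [transpose_apply] using this
    · intro x hx
      have hQx : Q *ᵥ x ≠ 0 := fun h => hx (hQinj x h)
      have h0 := hpd.dotProduct_mulVec_pos hQx
      rw [star_trivial] at h0 ⊢
      have : N *ᵥ x = Qᵀ *ᵥ (M *ᵥ (Q *ᵥ x)) := by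
        rw [mulVec_mulVec, mulVec_mulVec]
      rw [this, dotProduct_mulVec, vecMul_transpose]
      exact h0
  have hMunit : IsUnit M.det := hpd.det_pos.ne'.isUnit
  have hNunit : IsUnit N.det := hNpd.det_pos.ne'.isUnit
  set c := Qᵀ *ᵥ b with hcdef
  set z := N⁻¹ *ᵥ c with hzdef
  set x := M⁻¹ *ᵥ b - Q *ᵥ z with hxdef
  have hMMinv : M * M⁻¹ = 1 := Matrix.mul_nonsing_inv M hMunit
  have hNNinv : N * N⁻¹ = 1 := Matrix.mul_nonsing_inv N hNunit
  have hMx : M *ᵥ x = b - M *ᵥ (Q *ᵥ z) := by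
    rw [hxdef, mulVec_sub, mulVec_mulVec, hMMinv, one_mulVec]
  have hzc : c ⬝ᵥ N⁻¹ *ᵥ c = c ⬝ᵥ z := by rw [hzdef]
  have hT2 : (M⁻¹ *ᵥ b) ⬝ᵥ (M *ᵥ (Q *ᵥ z)) = c ⬝ᵥ z := by
    rw [dotProduct_mulVec, ← Matrix.mulVec_transpose, hMsymm, mulVec_mulVec,
      hMMinv, one_mulVec, dotProduct_mulVec, ← Matrix.mulVec_transpose]
  have hT3 : (Q *ᵥ z) ⬝ᵥ b = c ⬝ᵥ z := by
    rw [dotProduct_comm, dotProduct_mulVec, ← Matrix.mulVec_transpose]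
  have hT4 : (Q *ᵥ z) ⬝ᵥ (M *ᵥ (Q *ᵥ z)) = c ⬝ᵥ z := by
    have h1 : Qᵀ *ᵥ (M *ᵥ (Q *ᵥ z)) = c := by
      have : Qᵀ *ᵥ (M *ᵥ (Q *ᵥ z)) = N *ᵥ z := by
        rw [hNdef, mulVec_mulVec, mulVec_mulVec]
      rw [this, hzdef, mulVec_mulVec, hNNinv, one_mulVec]
    calc (Q *ᵥ z) ⬝ᵥ (M *ᵥ (Q *ᵥ z))
        = z ⬝ᵥ (Qᵀ *ᵥ (M *ᵥ (Q *ᵥ z))) := by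
          rw [dotProduct_comm, dotProduct_mulVec, ← Matrix.mulVec_transpose,
            dotProduct_comm]
      _ = z ⬝ᵥ c := by rw [h1]
      _ = c ⬝ᵥ z := dotProduct_comm z c
  have key : x ⬝ᵥ (M *ᵥ x) = b ⬝ᵥ M⁻¹ *ᵥ b - c ⬝ᵥ N⁻¹ *ᵥ c := by
    have expand : x ⬝ᵥ (M *ᵥ x) =
        (M⁻¹ *ᵥ b) ⬝ᵥ b - (M⁻¹ *ᵥ b) ⬝ᵥ (M *ᵥ (Q *ᵥ z))
          - ((Q *ᵥ z) ⬝ᵥ b - (Q *ᵥ z) ⬝ᵥ (M *ᵥ (Q *ᵥ z))) := by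
      rw [hMx, hxdef]
      simp only [sub_dotProduct, dotProduct_sub]
      ring
    rw [expand, hT2, hT3, hT4, hzc, dotProduct_comm (M⁻¹ *ᵥ b) b]
    ring
  have hpos : 0 ≤ x ⬝ᵥ (M *ᵥ x) := by
    have h := hpd.posSemidef.dotProduct_mulVec_nonneg x
    rwa [star_trivial] at h
  rw [key] at hpos
  exact hpos
end

section
/- Let λ̃₁, …, λ̃_r be distinct negative real numbers. The 2r×2r block matrix S̃ = [[S₁₁, S₁₂],[S₁₂, S₂₂]], where [S₁₁]_{ij} = -(λ̃_i+λ̃_j)^{-1}, [S₁₂]_{ij} = -(λ̃_i+λ̃_j)^{-2}, [S₂₂]_{ij} = -2(λ̃_i+λ̃_j)^{-3}, is symmetric positive definite. -/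
open Matrix MeasureTheory Set Real Filter



lemma tendsto_pow_exp_neg (n : ℕ) {b : ℝ} (hb : 0 < b) :
    Tendsto (fun t : ℝ => t ^ n * exp (-(b * t))) atTop (nhds 0) := by
  have h2 : Tendsto (fun s : ℝ => s ^ n * exp (-s)) atTop (nhds 0) :=
    tendsto_pow_mul_exp_neg_atTop_nhds_zero n
  have h3 : Tendsto (fun t : ℝ => b * t) atTop atTop :=
    Tendsto.const_mul_atTop hb tendsto_id
  have h4 : Tendsto (fun t : ℝ => (b*t) ^ n * exp (-(b*t))) atTop (nhds 0) := h2.comp h3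
  have h5 := h4.div_const (b ^ n)
  simp only [zero_div] at h5
  refine h5.congr' ?_
  filter_upwards [eventually_ne_atTop 0] with t ht
  rw [mul_pow]
  field_simp

lemma integrable_pow_exp (n : ℕ) {b : ℝ} (hb : 0 < b) :
    IntegrableOn (fun t : ℝ => t ^ n * exp (-(b * t))) (Ioi 0) := by
  apply integrable_of_isBigO_exp_neg (half_pos hb) (by fun_prop)
  apply Asymptotics.IsLittleO.isBigO
  apply Asymptotics.isLittleO_of_tendsto (fun x hx => absurd hx (exp_ne_zero _))
  have h : Tendsto (fun t : ℝ => t ^ n * exp (-(b/2 * t))) atTop (nhds 0) :=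
    tendsto_pow_exp_neg n (half_pos hb)
  refine h.congr fun t => ?_
  rw [mul_div_assoc, ← Real.exp_sub]
  ring_nf

lemma integral_pow_exp (n : ℕ) {b : ℝ} (hb : 0 < b) :
    ∫ t in Ioi (0:ℝ), t ^ n * exp (-(b * t)) = (n.factorial : ℝ) / b ^ (n + 1) := by
  have key : ∫ x in Ioi (0:ℝ), x ^ n * exp (-x) = (n.factorial : ℝ) := by
    have := Real.Gamma_eq_integral (s := (n:ℝ) + 1) (by positivity)
    rw [Real.Gamma_nat_eq_factorial] at this
    rw [this]
    refine setIntegral_congr_fun measurableSet_Ioi fun x hx => ?_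
    rw [add_sub_cancel_right, Real.rpow_natCast]
    ring
  have sub : ∫ t in Ioi (0:ℝ), (b * t) ^ n * exp (-(b * t))
      = b⁻¹ • ∫ x in Ioi (b * 0), x ^ n * exp (-x) :=
    integral_comp_mul_left_Ioi (fun x => x ^ n * exp (-x)) 0 hb
  rw [mul_zero, key, smul_eq_mul] at sub
  have expand : ∀ t : ℝ, (b*t)^n * exp (-(b*t)) = b ^ n * (t ^ n * exp (-(b*t))) := by
    intro t; rw [mul_pow]; ring
  simp_rw [expand, integral_const_mul] at sub
  have hbn : (b:ℝ) ^ n ≠ 0 := pow_ne_zero _ hb.ne'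
  field_simp at sub ⊢
  rw [pow_succ]
  linarith [sub]



lemma integrable_poly2_exp {a : ℝ} (ha : a < 0) (c d e : ℝ) :
    IntegrableOn (fun t : ℝ => (c + d*t + e*t^2) * exp (a*t)) (Ioi 0) := by
  have hb : 0 < -a := neg_pos.mpr ha
  have h0 := ((integrable_pow_exp 0 hb).const_mul c)
  have h1 := ((integrable_pow_exp 1 hb).const_mul d)
  have h2 := ((integrable_pow_exp 2 hb).const_mul e)
  have heq : (fun t : ℝ => (c + d*t + e*t^2) * exp (a*t))
      = fun t => c * (t^0 * exp (-(-a*t))) + (d * (t^1 * exp (-(-a*t))) + e * (t^2 * exp (-(-a*t)))) := by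
    funext t
    have h : -(-a * t) = a * t := by ring
    rw [h]; ring
  rw [heq]
  exact h0.add (h1.add h2)

lemma integral_poly2_exp {a : ℝ} (ha : a < 0) (c d e : ℝ) :
    ∫ t in Ioi (0:ℝ), (c + d*t + e*t^2) * exp (a*t)
      = c * (-a)⁻¹ + d * ((-a)^2)⁻¹ + e * (2 * ((-a)^3)⁻¹) := by
  have hb : 0 < -a := neg_pos.mpr ha
  have h0 := ((integrable_pow_exp 0 hb).const_mul c)
  have h1 := ((integrable_pow_exp 1 hb).const_mul d)
  have h2 := ((integrable_pow_exp 2 hb).const_mul e)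
  have heq : (fun t : ℝ => (c + d*t + e*t^2) * exp (a*t))
      = fun t => c * (t^0 * exp (-(-a*t))) + (d * (t^1 * exp (-(-a*t))) + e * (t^2 * exp (-(-a*t)))) := by
    funext t
    have h : -(-a * t) = a * t := by ring
    rw [h]; ring
  have hadd := integral_add h0 (h1.add h2)
  simp only [Pi.add_apply] at hadd
  rw [heq, hadd, integral_add h1 h2,
    integral_const_mul, integral_const_mul, integral_const_mul,
    integral_pow_exp 0 hb, integral_pow_exp 1 hb, integral_pow_exp 2 hb]
  have hb' : (-a) ≠ 0 := hb.ne'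
  have ha' : a ≠ 0 := ha.ne
  simp only [Nat.factorial, Nat.cast_ofNat, Nat.cast_one, pow_one]
  field_simp
  ring

lemma tendsto_affine_exp {d : ℝ} (hd : d < 0) (c₁ c₂ : ℝ) :
    Tendsto (fun t : ℝ => (c₁ + c₂ * t) * exp (d * t)) atTop (nhds 0) := by
  have hb : 0 < -d := neg_pos.mpr hd
  have h0 := (tendsto_pow_exp_neg 0 hb).const_mul c₁
  have h1 := (tendsto_pow_exp_neg 1 hb).const_mul c₂
  have h := h0.add h1
  simp only [mul_zero, add_zero] at h
  refine h.congr fun t => ?_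
  have : -(-d * t) = d * t := by ring
  rw [this]; ring



lemma exp_poly_indep {ι : Type*} [DecidableEq ι] (s : Finset ι) (lam a b : ι → ℝ)
    (hinj : Set.InjOn lam s)
    (h : ∀ᶠ t in atTop, ∑ i ∈ s, (a i + b i * t) * exp (lam i * t) = 0) :
    ∀ i ∈ s, a i = 0 ∧ b i = 0 := by
  induction s using Finset.strongInduction with
  | _ s ih =>
    rcases s.eq_empty_or_nonempty with rfl | hs
    · simp
    obtain ⟨i0, hi0s, hmax⟩ := s.exists_max_image lam hs
    have hlt : ∀ i ∈ s.erase i0, lam i - lam i0 < 0 := by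
      intro i hi
      have his : i ∈ s := Finset.mem_of_mem_erase hi
      have hne : i ≠ i0 := Finset.ne_of_mem_erase hi
      have hle := hmax i his
      have : lam i ≠ lam i0 := fun hl => hne (hinj his hi0s hl)
      have := lt_of_le_of_ne hle this
      linarith
    -- the sum over erase tends to 0
    have htail : Tendsto (fun t : ℝ => ∑ i ∈ s.erase i0,
        (a i + b i * t) * exp ((lam i - lam i0) * t)) atTop (nhds 0) := by
      have := tendsto_finset_sum (s.erase i0)
        (fun i hi => tendsto_affine_exp (hlt i hi) (a i) (b i))
      simpa using this
    have hev : ∀ᶠ t in atTop, a i0 + b i0 * t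
        = -∑ i ∈ s.erase i0, (a i + b i * t) * exp ((lam i - lam i0) * t) := by
      filter_upwards [h] with t ht
      have hsplit : ∑ i ∈ s, (a i + b i * t) * exp (lam i * t)
          = (a i0 + b i0 * t) * exp (lam i0 * t)
            + ∑ i ∈ s.erase i0, (a i + b i * t) * exp (lam i * t) :=
        (Finset.add_sum_erase s _ hi0s).symm
      have hexp : exp (lam i0 * t) ≠ 0 := exp_ne_zero _
      have key : (a i0 + b i0 * t)
          = -∑ i ∈ s.erase i0, (a i + b i * t) * exp (lam i * t) / exp (lam i0 * t) := by
        rw [← Finset.sum_div]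
        rw [neg_div', eq_div_iff hexp]
        linarith [hsplit.symm.trans ht]
      rw [key]
      congr 1
      refine Finset.sum_congr rfl fun i hi => ?_
      rw [sub_mul, exp_sub, mul_div_assoc]
    have haff : Tendsto (fun t : ℝ => a i0 + b i0 * t) atTop (nhds 0) := by
      have htn := htail.neg
      rw [neg_zero] at htn
      refine Tendsto.congr' ?_ htn
      · filter_upwards [hev] with t ht
        rw [ht]
    -- deduce b i0 = 0
    have hb0 : b i0 = 0 := by
      have h1 : Tendsto (fun t : ℝ => (a i0 + b i0 * t) / t) atTop (nhds 0) :=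
        haff.div_atTop tendsto_id
      have h2 : Tendsto (fun t : ℝ => (a i0 + b i0 * t) / t) atTop (nhds (b i0)) := by
        have h3 : Tendsto (fun t : ℝ => a i0 * t⁻¹ + b i0) atTop (nhds (a i0 * 0 + b i0)) :=
          ((tendsto_const_nhds.mul tendsto_inv_atTop_zero).add tendsto_const_nhds)
        rw [mul_zero, zero_add] at h3
        refine h3.congr' ?_
        filter_upwards [eventually_ne_atTop 0] with t ht
        field_simp
      have := tendsto_nhds_unique h1 h2
      linarith
    have ha0 : a i0 = 0 := by
      rw [hb0] at haff
      simp only [zero_mul, add_zero] at haff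
      exact tendsto_nhds_unique tendsto_const_nhds haff
    -- recurse
    have herase : ∀ i ∈ s.erase i0, a i = 0 ∧ b i = 0 := by
      refine ih (s.erase i0) (Finset.erase_ssubset hi0s)
        (hinj.mono (fun x hx => Finset.mem_of_mem_erase hx)) ?_
      filter_upwards [h] with t ht
      have hsplit : ∑ i ∈ s, (a i + b i * t) * exp (lam i * t)
          = (a i0 + b i0 * t) * exp (lam i0 * t)
            + ∑ i ∈ s.erase i0, (a i + b i * t) * exp (lam i * t) :=
        (Finset.add_sum_erase s _ hi0s).symm
      rw [ha0, hb0] at hsplit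
      simp only [zero_mul, add_zero, zero_add] at hsplit
      linarith [hsplit.symm.trans ht]
    intro i hi
    rcases eq_or_ne i i0 with rfl | hne
    · exact ⟨ha0, hb0⟩
    · exact herase i (Finset.mem_erase.mpr ⟨hne, hi⟩)

lemma eq_zero_of_integral_sq {f : ℝ → ℝ} (hc : Continuous f)
    (hi : IntegrableOn (fun t => f t ^ 2) (Ioi 0))
    (h : ∫ t in Ioi (0:ℝ), f t ^ 2 = 0) : ∀ t ∈ Ioi (0:ℝ), f t = 0 := by
  by_contra hcon
  push_neg at hcon
  obtain ⟨t₀, ht₀, hft₀⟩ := hcon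
  have hpos : 0 < ∫ t in Ioi (0:ℝ), f t ^ 2 := by
    rw [setIntegral_pos_iff_support_of_nonneg_ae
      (Filter.Eventually.of_forall fun x => sq_nonneg _) hi]
    have hU : IsOpen ({x | f x ≠ 0} ∩ Ioi 0) :=
      (isOpen_compl_singleton.preimage hc).inter isOpen_Ioi
    have hsub : ({x | f x ≠ 0} ∩ Ioi 0) ⊆ Function.support (fun t => f t ^ 2) ∩ Ioi 0 := by
      intro x hx
      exact ⟨pow_ne_zero 2 hx.1, hx.2⟩
    calc (0:ENNReal) < volume ({x | f x ≠ 0} ∩ Ioi 0) :=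
          hU.measure_pos volume ⟨t₀, hft₀, ht₀⟩
      _ ≤ _ := measure_mono hsub
  linarith



theorem stmt_7 {r : ℕ} (lam : Fin r → ℝ) (hneg : ∀ i, lam i < 0)
    (hdist : Function.Injective lam)
    (S11 S12 S22 : Matrix (Fin r) (Fin r) ℝ)
    (hS11 : ∀ i j, S11 i j = -(lam i + lam j)⁻¹)
    (hS12 : ∀ i j, S12 i j = -((lam i + lam j) ^ 2)⁻¹)
    (hS22 : ∀ i j, S22 i j = -2 * ((lam i + lam j) ^ 3)⁻¹) :
    (Matrix.fromBlocks S11 S12 S12 S22).IsSymm ∧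
    (Matrix.fromBlocks S11 S12 S12 S22).PosDef := by
  have h11 : S11ᵀ = S11 := by ext i j; simp [transpose_apply, hS11, add_comm]
  have h12 : S12ᵀ = S12 := by ext i j; simp [transpose_apply, hS12, add_comm]
  have h22 : S22ᵀ = S22 := by ext i j; simp [transpose_apply, hS22, add_comm]
  have hsymm : (Matrix.fromBlocks S11 S12 S12 S22).IsSymm := by
    rw [Matrix.IsSymm, fromBlocks_transpose, h11, h12, h22]
  refine ⟨hsymm, Matrix.posDef_iff_dotProduct_mulVec.mpr ⟨?_, ?_⟩⟩
  · -- IsHermitian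
    rw [Matrix.IsHermitian, conjTranspose]
    ext i j; simpa using congrFun (congrFun hsymm.eq i) j
  · intro x hx
    set z : Fin r → ℝ := fun i => x (Sum.inl i) with hz
    set w : Fin r → ℝ := fun i => x (Sum.inr i) with hw
    set f : ℝ → ℝ := fun t => ∑ i, (z i - w i * t) * exp (lam i * t) with hf
    have hab : ∀ i j : Fin r, lam i + lam j < 0 := fun i j => by linarith [hneg i, hneg j]
    have hgint : ∀ i j : Fin r, IntegrableOn
        (fun t : ℝ => (z i - w i * t) * (z j - w j * t) * exp ((lam i + lam j) * t)) (Ioi 0) := by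
      intro i j
      have := integrable_poly2_exp (hab i j) (z i * z j) (-(z i * w j + w i * z j)) (w i * w j)
      refine this.congr_fun (fun t _ => ?_) measurableSet_Ioi
      ring_nf
    have hpair : ∀ i j : Fin r,
        ∫ t in Ioi (0:ℝ), (z i - w i * t) * (z j - w j * t) * exp ((lam i + lam j) * t)
          = z i * S11 i j * z j + z i * S12 i j * w j + w i * S12 i j * z j
            + w i * S22 i j * w j := by
      intro i j
      have hint := integral_poly2_exp (hab i j) (z i * z j) (-(z i * w j + w i * z j)) (w i * w j)
      have heq : (fun t : ℝ => (z i * z j + -(z i * w j + w i * z j)*t + (w i * w j)*t^2)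
            * exp ((lam i + lam j)*t))
          = fun t : ℝ => (z i - w i * t) * (z j - w j * t) * exp ((lam i + lam j) * t) := by
        funext t; ring
      rw [heq] at hint
      rw [hint, hS11, hS12, hS22]
      have key : ∀ A : ℝ, A ≠ 0 →
          z i * z j * (-A)⁻¹ + -(z i * w j + w i * z j) * ((-A) ^ 2)⁻¹
            + w i * w j * (2 * ((-A) ^ 3)⁻¹)
          = z i * -A⁻¹ * z j + z i * -(A ^ 2)⁻¹ * w j + w i * -(A ^ 2)⁻¹ * z j
            + w i * (-2 * (A ^ 3)⁻¹) * w j := by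
        intro A hA
        have h3 : ((-A) ^ 3)⁻¹ = -(A ^ 3)⁻¹ := by
          rw [Odd.neg_pow (by decide), inv_neg]
        rw [inv_neg, neg_sq, h3]
        ring
      exact key (lam i + lam j) (ne_of_lt (hab i j))
    -- the quadratic form as a double sum
    have hQ : star x ⬝ᵥ ((Matrix.fromBlocks S11 S12 S12 S22) *ᵥ x)
        = ∑ i, ∑ j, (z i * S11 i j * z j + z i * S12 i j * w j + w i * S12 i j * z j
            + w i * S22 i j * w j) := by
      simp only [star_trivial, dotProduct, mulVec, Fintype.sum_sum_type,
        fromBlocks_apply₁₁, fromBlocks_apply₁₂, fromBlocks_apply₂₁, fromBlocks_apply₂₂]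
      rw [← Finset.sum_add_distrib]
      refine Finset.sum_congr rfl fun i _ => ?_
      simp only [Finset.sum_add_distrib, ← Finset.mul_sum, dotProduct]
      simp only [Finset.mul_sum, ← Finset.sum_add_distrib]
      refine Finset.sum_congr rfl fun j _ => ?_
      ring
    -- equals the integral of f^2
    have hint2 : ∀ i : Fin r, IntegrableOn
        (fun t : ℝ => ∑ j, (z i - w i * t) * (z j - w j * t) * exp ((lam i + lam j) * t))
        (Ioi 0) := fun i => integrable_finset_sum _ fun j _ => hgint i j
    have hsq : ∀ t : ℝ, f t ^ 2
        = ∑ i, ∑ j, (z i - w i * t) * (z j - w j * t) * exp ((lam i + lam j) * t) := by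
      intro t
      rw [hf, sq, Finset.sum_mul_sum]
      refine Finset.sum_congr rfl fun i _ => Finset.sum_congr rfl fun j _ => ?_
      rw [add_mul, exp_add]
      ring
    have hfsqint : IntegrableOn (fun t => f t ^ 2) (Ioi 0) := by
      have : IntegrableOn (fun t : ℝ => ∑ i, ∑ j,
          (z i - w i * t) * (z j - w j * t) * exp ((lam i + lam j) * t)) (Ioi 0) :=
        integrable_finset_sum _ fun i _ => hint2 i
      exact this.congr_fun (fun t _ => (hsq t).symm) measurableSet_Ioi
    have hQint : star x ⬝ᵥ ((Matrix.fromBlocks S11 S12 S12 S22) *ᵥ x)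
        = ∫ t in Ioi (0:ℝ), f t ^ 2 := by
      rw [hQ]
      have step1 : ∀ i : Fin r, ∑ j, (z i * S11 i j * z j + z i * S12 i j * w j
            + w i * S12 i j * z j + w i * S22 i j * w j)
          = ∫ t in Ioi (0:ℝ), ∑ j, (z i - w i * t) * (z j - w j * t)
              * exp ((lam i + lam j) * t) := by
        intro i
        rw [integral_finset_sum _ fun j _ => hgint i j]
        exact Finset.sum_congr rfl fun j _ => (hpair i j).symm
      simp_rw [step1]
      rw [← integral_finset_sum _ fun i _ => hint2 i]
      refine setIntegral_congr_fun measurableSet_Ioi fun t _ => (hsq t).symm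
    rw [hQint]
    -- positivity
    have hnn : 0 ≤ ∫ t in Ioi (0:ℝ), f t ^ 2 :=
      setIntegral_nonneg measurableSet_Ioi fun t _ => sq_nonneg _
    rcases hnn.lt_or_eq with hlt | heq0
    · exact hlt
    exfalso
    have hfc : Continuous f := by
      apply continuous_finset_sum
      intro i _
      fun_prop
    have hzero := eq_zero_of_integral_sq hfc hfsqint heq0.symm
    have hev : ∀ᶠ t in atTop, ∑ i ∈ Finset.univ, (z i + (-(w i)) * t) * exp (lam i * t) = 0 := by
      filter_upwards [eventually_gt_atTop (0:ℝ)] with t ht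
      have := hzero t ht
      rw [hf] at this
      rw [← this]
      refine Finset.sum_congr rfl fun i _ => ?_
      ring
    have := exp_poly_indep Finset.univ lam z (fun i => -(w i)) (hdist.injOn) hev
    apply hx
    funext p
    cases p with
    | inl i => exact (this i (Finset.mem_univ i)).1
    | inr i =>
      have h := (this i (Finset.mem_univ i)).2
      simp only [neg_eq_zero] at h
      simpa using h
end

section
/- Let H(s) = K·Π_{i=1}^{n-1}(s-zᵢ)/Π_{j=1}^{n}(s-λ_j) be a real rational function with 0 > λ₁ > z₁ > λ₂ > z₂ > … > z_{n-1} > λₙ and K > 0. Then H admits a partial fraction decomposition H(s) = Σᵢ₌₁ⁿ bᵢ/(s - λᵢ) with all residues bᵢ > 0. -/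
open Polynomial Finset

theorem stmt_14 {m : ℕ} (lam : Fin (m + 1) → ℝ) (z : Fin m → ℝ) (K : ℝ)
    (hK : 0 < K) (hlam0 : lam 0 < 0)
    (hinter : ∀ i : Fin m, z i < lam i.castSucc ∧ lam i.succ < z i) :
    ∃ b : Fin (m + 1) → ℝ, (∀ i, 0 < b i) ∧
      ∀ s : ℝ, (∀ j, s ≠ lam j) →
        K * (∏ i, (s - z i)) / (∏ j, (s - lam j)) = ∑ i, b i / (s - lam i) := by
  classical
  have hanti : StrictAnti lam := by
    rw [Fin.strictAnti_iff_succ_lt]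
    intro i
    exact (hinter i).2.trans (hinter i).1
  have hinj : Function.Injective lam := hanti.injective
  have herase : ∀ (i : Fin (m + 1)) (h : Fin (m + 1) → ℝ),
      ∏ j ∈ Finset.univ.erase i, h j = ∏ k : Fin m, h (i.succAbove k) := by
    intro i h
    rw [← Finset.compl_singleton, ← Fin.image_succAbove_univ,
      Finset.prod_image (fun a _ c _ hac => i.succAbove_right_injective hac)]
  set b : Fin (m + 1) → ℝ :=
    fun i => K * ∏ k : Fin m, (lam i - z k) / (lam i - lam (i.succAbove k)) with hb
  have hfac : ∀ (i : Fin (m + 1)) (k : Fin m),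
      0 < (lam i - z k) / (lam i - lam (i.succAbove k)) := by
    intro i k
    rcases lt_or_ge k.castSucc i with h | h
    · rw [Fin.succAbove_of_castSucc_lt _ _ h]
      have h1 : lam i ≤ lam k.succ := hanti.antitone (Fin.castSucc_lt_iff_succ_le.mp h)
      have h2 : lam i < lam k.castSucc := hanti h
      exact div_pos_of_neg_of_neg (by linarith [(hinter k).2]) (by linarith)
    · rw [Fin.succAbove_of_le_castSucc _ _ h]
      have h1 : lam k.castSucc ≤ lam i := hanti.antitone h
      have h2 : lam k.succ < lam i := hanti (lt_of_le_of_lt h (Fin.castSucc_lt_succ (i := k)))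
      exact div_pos (by linarith [(hinter k).1]) (by linarith)
  have hbpos : ∀ i, 0 < b i := fun i =>
    mul_pos hK (Finset.prod_pos fun k _ => hfac i k)
  -- key polynomial identity
  have hkey : ∀ s : ℝ, K * ∏ k, (s - z k) =
      ∑ i, b i * ∏ j ∈ Finset.univ.erase i, (s - lam j) := by
    have hpoly : (C K * ∏ k, (X - C (z k)) : ℝ[X]) =
        ∑ i, C (b i) * ∏ j ∈ Finset.univ.erase i, (X - C (lam j)) := by
      apply Polynomial.eq_of_degrees_lt_of_eval_index_eq (s := Finset.univ) (v := lam)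
        (fun a _ c _ hac => hinj hac)
      · rw [Finset.card_univ, Fintype.card_fin]
        calc (C K * ∏ k, (X - C (z k)) : ℝ[X]).degree
            ≤ 0 + ∑ k : Fin m, (X - C (z k) : ℝ[X]).degree := by
              refine le_trans (degree_mul_le _ _) (add_le_add degree_C_le (degree_prod_le _ _))
          _ ≤ 0 + ∑ _k : Fin m, (1 : WithBot ℕ) := by
              gcongr with k
              exact degree_X_sub_C_le _
          _ < (m + 1 : ℕ) := by
              simp [Finset.sum_const]
              exact_mod_cast Nat.lt_succ_self m
      · rw [Finset.card_univ, Fintype.card_fin]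
        refine lt_of_le_of_lt (degree_sum_le _ _) ?_
        rw [Finset.sup_lt_iff (by exact_mod_cast WithBot.bot_lt_coe (m + 1))]
        intro i _
        calc (C (b i) * ∏ j ∈ Finset.univ.erase i, (X - C (lam j)) : ℝ[X]).degree
            ≤ 0 + ∑ j ∈ Finset.univ.erase i, (X - C (lam j) : ℝ[X]).degree := by
              refine le_trans (degree_mul_le _ _) (add_le_add degree_C_le (degree_prod_le _ _))
          _ ≤ 0 + ∑ _j ∈ Finset.univ.erase i, (1 : WithBot ℕ) := by
              gcongr with j
              exact degree_X_sub_C_le _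
          _ < (m + 1 : ℕ) := by
              simp [Finset.sum_const, Finset.card_erase_of_mem, Finset.card_univ]
              exact_mod_cast Nat.lt_succ_self m
      · intro i _
        simp only [eval_mul, eval_prod, eval_C, eval_sub, eval_X, eval_finset_sum]
        rw [Finset.sum_eq_single i]
        · rw [herase i (fun j => lam i - lam j), hb]
          rw [mul_assoc, ← Finset.prod_mul_distrib]
          congr 1
          refine Finset.prod_congr rfl fun k _ => ?_
          rw [div_mul_cancel₀]
          exact sub_ne_zero.mpr (hinj.ne (Fin.succAbove_ne i k).symm)
        · intro i' _ hne
          refine mul_eq_zero_of_right _ (Finset.prod_eq_zero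
            (Finset.mem_erase.mpr ⟨hne.symm, Finset.mem_univ i⟩) (sub_self _))
        · intro h
          exact absurd (Finset.mem_univ i) h
    intro s
    have := congrArg (Polynomial.eval s) hpoly
    simpa only [eval_mul, eval_prod, eval_finset_sum, eval_sub, eval_X, eval_C] using this
  refine ⟨b, hbpos, fun s hs => ?_⟩
  have hne : ∀ j, s - lam j ≠ 0 := fun j => sub_ne_zero.mpr (hs j)
  have hden : (∏ j, (s - lam j)) ≠ 0 := Finset.prod_ne_zero_iff.mpr fun j _ => hne j
  rw [div_eq_iff hden, Finset.sum_mul, hkey s]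
  refine Finset.sum_congr rfl fun i _ => ?_
  rw [← Finset.mul_prod_erase _ _ (Finset.mem_univ i), div_mul_eq_mul_div, mul_comm (s - lam i),
    mul_assoc, mul_div_assoc, mul_div_cancel_right₀ _ (hne i)]
  ring
end
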